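/- Let r be a positive integer, F a finite field with 2^r elements, and n ≥ 2. Let P(n,F) be the subgroup of Sp(2n,F) consisting of block matrices [[A, A·B],[0, (Aᵀ)⁻¹]] with A ∈ Up_n(F) and B symmetric. Then the center of P(n,F) is exactly the set of block matrices [[I_n, D],[0, I_n]] with D = a·E_{1,1} + b·(E_{1,2} + E_{2,1}) for a, b ∈ F, and this center is isomorphic to (ℤ/2ℤ)^{2r}. -/

import Mathlib

open Matrix

/-- `M` is an upper unitriangular matrix. -/
def IsUnitriangular {n : ℕ} {F : Type} [Field F]
    (M : Matrix (Fin n) (Fin n) F) : Prop :=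
  (∀ i, M i i = 1) ∧ ∀ i j : Fin n, j < i → M i j = 0

namespace CenterSylow

variable {n : ℕ} {F : Type} [Field F]

def Dm (hn : 2 ≤ n) (a b : F) : Matrix (Fin n) (Fin n) F :=
  a • Matrix.single (⟨0, by omega⟩ : Fin n) (⟨0, by omega⟩ : Fin n) (1 : F) +
  b • (Matrix.single (⟨0, by omega⟩ : Fin n) (⟨1, by omega⟩ : Fin n) (1 : F) +
       Matrix.single (⟨1, by omega⟩ : Fin n) (⟨0, by omega⟩ : Fin n) (1 : F))

lemma entry_conj (C : Matrix (Fin n) (Fin n) F) (k l i j : Fin n) :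
    (C * Matrix.single k l (1 : F) * Cᵀ) i j = C i k * C j l := by
  simp [Matrix.mul_apply, Matrix.single, ite_and, Finset.sum_mul, mul_comm]

lemma col0 {C : Matrix (Fin n) (Fin n) F} (hC : IsUnitriangular C) (hn : 2 ≤ n) (i : Fin n) :
    C i ⟨0, by omega⟩ = if i = ⟨0, by omega⟩ then 1 else 0 := by
  by_cases h : i = ⟨0, by omega⟩
  · subst h; simp [hC.1]
  · rw [if_neg h]
    have hv : i.val ≠ 0 := fun hv => h (Fin.ext hv)
    exact hC.2 i _ (Fin.lt_def.mpr (Nat.pos_of_ne_zero hv))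

lemma conj_Dm {C : Matrix (Fin n) (Fin n) F} (hC : IsUnitriangular C) (hn : 2 ≤ n)
    (h2 : ∀ x : F, x + x = 0) (a b : F) :
    C * Dm hn a b * Cᵀ = Dm hn a b := by
  set i0 : Fin n := ⟨0, by omega⟩ with hi0
  set i1 : Fin n := ⟨1, by omega⟩ with hi1
  have h01 : i0 ≠ i1 := by simp [hi0, hi1, Fin.ext_iff]
  ext i j
  have expand : (C * Dm hn a b * Cᵀ) i j =
      a * (C i i0 * C j i0) + b * (C i i0 * C j i1 + C i i1 * C j i0) := by
    have : C * Dm hn a b * Cᵀ =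
        a • (C * Matrix.single i0 i0 (1:F) * Cᵀ) +
        b • (C * Matrix.single i0 i1 (1:F) * Cᵀ +
             C * Matrix.single i1 i0 (1:F) * Cᵀ) := by
      simp only [Dm, ← hi0, ← hi1, Matrix.mul_add, Matrix.add_mul, Matrix.mul_smul, Matrix.smul_mul]
    rw [this]
    simp only [Matrix.add_apply, Matrix.smul_apply, smul_eq_mul, entry_conj]
  rw [expand, col0 hC hn i, col0 hC hn j]
  by_cases h1 : i = i0 <;> by_cases h2' : j = i0
  · subst h1; subst h2'
    simp [Dm, ← hi0, ← hi1, Matrix.single, h01, h01.symm, mul_add, h2 (b * C i0 i1)]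
  · subst h1
    by_cases h3 : j = i1
    · subst h3
      simp [Dm, ← hi0, ← hi1, Matrix.single, h01, h01.symm, hC.1]
    · have hji : C j i1 = 0 := by
        refine hC.2 j i1 (Fin.lt_def.mpr ?_)
        show 1 < j.val
        have v0 : j.val ≠ 0 := fun hv => h2' (Fin.ext hv)
        have v1 : j.val ≠ 1 := fun hv => h3 (Fin.ext hv)
        omega
      have e1 : ¬ (i0 = j) := fun h => h2' h.symm
      have e2 : ¬ (i1 = j) := fun h => h3 h.symm
      simp [Dm, ← hi0, ← hi1, Matrix.single, e1, e2, h2', h3, hji]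
  · subst h2'
    by_cases h3 : i = i1
    · subst h3
      simp [Dm, ← hi0, ← hi1, Matrix.single, h01, h01.symm, hC.1]
    · have hii : C i i1 = 0 := by
        refine hC.2 i i1 (Fin.lt_def.mpr ?_)
        show 1 < i.val
        have v0 : i.val ≠ 0 := fun hv => h1 (Fin.ext hv)
        have v1 : i.val ≠ 1 := fun hv => h3 (Fin.ext hv)
        omega
      have e1 : ¬ (i0 = i) := fun h => h1 h.symm
      have e2 : ¬ (i1 = i) := fun h => h3 h.symm
      simp [Dm, ← hi0, ← hi1, Matrix.single, e1, e2, h1, h3, hii]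
  · have e1 : ¬ (i0 = i) := fun h => h1 h.symm
    have e2 : ¬ (i0 = j) := fun h => h2' h.symm
    simp [Dm, ← hi0, ← hi1, Matrix.single, e1, e2, h1, h2']

lemma transpose_std (i j : Fin n) (c : F) :
    (Matrix.single i j c)ᵀ = Matrix.single j i c := by
  ext k l
  simp [Matrix.single, and_comm]

lemma Dm_symm (hn : 2 ≤ n) (a b : F) : (Dm hn a b)ᵀ = Dm hn a b := by
  simp only [Dm, Matrix.transpose_add, Matrix.transpose_smul, transpose_std]
  abel

lemma uni_one : IsUnitriangular (1 : Matrix (Fin n) (Fin n) F) :=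
  ⟨fun i => Matrix.one_apply_eq i, fun i j h => Matrix.one_apply_ne h.ne'⟩

/-- Unitriangular implies symmetric-conjugation-invariance facts; Bform. -/
lemma Bform (hn : 2 ≤ n) {B : Matrix (Fin n) (Fin n) F} (hBs : Bᵀ = B)
    (h : ∀ i j l : Fin n, i < j → l ≠ i → B j l = 0) :
    B = Dm hn (B ⟨0, by omega⟩ ⟨0, by omega⟩) (B ⟨0, by omega⟩ ⟨1, by omega⟩) := by
  set i0 : Fin n := ⟨0, by omega⟩ with hi0
  set i1 : Fin n := ⟨1, by omega⟩ with hi1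
  have h01 : i0 ≠ i1 := by simp [hi0, hi1, Fin.ext_iff]
  have h01' : i0 < i1 := by simp [hi0, hi1, Fin.lt_def]
  have hsym : ∀ k l : Fin n, B k l = B l k := fun k l => by
    have := congrFun (congrFun hBs l) k
    simpa [Matrix.transpose_apply] using this
  ext k l
  by_cases hk0 : k = i0
  · subst hk0
    by_cases hl0 : l = i0
    · subst hl0; simp [Dm, ← hi0, ← hi1, Matrix.single, h01, h01.symm]
    · by_cases hl1 : l = i1
      · subst hl1; simp [Dm, ← hi0, ← hi1, Matrix.single, h01, h01.symm]
      · have hlv : 1 < l.val := by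
          have v0 : l.val ≠ 0 := fun hv => hl0 (Fin.ext hv)
          have v1 : l.val ≠ 1 := fun hv => hl1 (Fin.ext hv)
          omega
        have : B l i0 = 0 := h i1 l i0 (Fin.lt_def.mpr hlv) h01
        have hB0 : B i0 l = 0 := by rw [hsym]; exact this
        have e1 : ¬ (i0 = l) := fun hh => hl0 hh.symm
        have e2 : ¬ (i1 = l) := fun hh => hl1 hh.symm
        simp [Dm, ← hi0, ← hi1, Matrix.single, e1, e2, hB0]
  · by_cases hk1 : k = i1
    · subst hk1
      by_cases hl0 : l = i0
      · subst hl0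
        have : B i1 i0 = B i0 i1 := hsym _ _
        rw [this]
        simp [Dm, ← hi0, ← hi1, Matrix.single, h01, h01.symm]
      · by_cases hl1 : l = i1
        · subst hl1
          have : B i1 i1 = 0 := h i0 i1 i1 h01' h01.symm
          simp [Dm, ← hi0, ← hi1, Matrix.single, h01, h01.symm, this]
        · have hlv : 1 < l.val := by
            have v0 : l.val ≠ 0 := fun hv => hl0 (Fin.ext hv)
            have v1 : l.val ≠ 1 := fun hv => hl1 (Fin.ext hv)
            omega
          have : B l i1 = 0 := h i0 l i1 (Fin.lt_def.mpr (show (0:ℕ) < l.val by omega)) h01.symm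
          have hB0 : B i1 l = 0 := by rw [hsym]; exact this
          have e1 : ¬ (i0 = l) := fun hh => hl0 hh.symm
          have e2 : ¬ (i1 = l) := fun hh => hl1 hh.symm
          have e3 : ¬ (i0 = i1) := h01
          simp [Dm, ← hi0, ← hi1, Matrix.single, e1, e2, e3, hB0]
    · have hkv : 1 < k.val := by
        have v0 : k.val ≠ 0 := fun hv => hk0 (Fin.ext hv)
        have v1 : k.val ≠ 1 := fun hv => hk1 (Fin.ext hv)
        omega
      have hB0 : B k l = 0 := by
        by_cases hl0 : l = i0
        · subst hl0; exact h i1 k i0 (Fin.lt_def.mpr hkv) h01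
        · exact h i0 k l (Fin.lt_def.mpr (show (0:ℕ) < k.val by omega)) hl0
      have e1 : ¬ (i0 = k) := fun hh => hk0 hh.symm
      have e2 : ¬ (i1 = k) := fun hh => hk1 hh.symm
      simp [Dm, ← hi0, ← hi1, Matrix.single, e1, e2, hB0]

lemma uni_det {C : Matrix (Fin n) (Fin n) F} (hC : IsUnitriangular C) : C.det = 1 := by
  rw [Matrix.det_of_upperTriangular (fun i j h => hC.2 i j h)]
  simp [hC.1]

lemma uni_isUnit_det {C : Matrix (Fin n) (Fin n) F} (hC : IsUnitriangular C) : IsUnit C.det := by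
  rw [uni_det hC]; exact isUnit_one

/-- The GL element `[[1, D],[0, 1]]`, self-inverse when `D + D = 0`. -/
def glUnip (D : Matrix (Fin n) (Fin n) F) (hD : D + D = 0) : GL (Fin n ⊕ Fin n) F :=
  ⟨Matrix.fromBlocks 1 D 0 1, Matrix.fromBlocks 1 D 0 1,
   by rw [Matrix.fromBlocks_multiply]; simp [hD, Matrix.fromBlocks_one],
   by rw [Matrix.fromBlocks_multiply]; simp [hD, Matrix.fromBlocks_one]⟩

lemma glUnip_val (D : Matrix (Fin n) (Fin n) F) (hD : D + D = 0) :
    (glUnip D hD : Matrix (Fin n ⊕ Fin n) (Fin n ⊕ Fin n) F) = Matrix.fromBlocks 1 D 0 1 := rfl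

lemma Dm_add_self (hn : 2 ≤ n) (h2 : ∀ x : F, x + x = 0) (a b : F) :
    Dm hn a b + Dm hn a b = 0 := by
  ext i j
  exact h2 _

theorem central_iff (hn : 2 ≤ n)
    (h2 : ∀ x : F, x + x = 0)
    (P : Subgroup (GL (Fin n ⊕ Fin n) F))
    (hP : ∀ M : GL (Fin n ⊕ Fin n) F, M ∈ P ↔
      ∃ A B : Matrix (Fin n) (Fin n) F,
        IsUnitriangular A ∧ Bᵀ = B ∧
        (M : Matrix (Fin n ⊕ Fin n) (Fin n ⊕ Fin n) F) =
          Matrix.fromBlocks A (A * B) 0 (Aᵀ)⁻¹)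
    (M : GL (Fin n ⊕ Fin n) F) :
    (M ∈ P ∧ ∀ N ∈ P, M * N = N * M) ↔
      ∃ a b : F, (M : Matrix (Fin n ⊕ Fin n) (Fin n ⊕ Fin n) F) =
        Matrix.fromBlocks 1 (Dm hn a b) 0 1 := by
  constructor
  · rintro ⟨hMP, hcent⟩
    obtain ⟨A, B, hA, hBs, hM⟩ := (hP M).mp hMP
    -- Step 1 : A = 1, via commuting with [[1, E],[0,1]] for diagonal stdBasisMatrix E
    have hA1 : A = 1 := by
      have key : ∀ j : Fin n, A * Matrix.single j j (1:F) * Aᵀ =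
          Matrix.single j j (1:F) := by
        intro j
        set E := Matrix.single j j (1:F) with hE
        have hE0 : E + E = 0 := by
          rw [hE, ← Matrix.single_add, h2 (1:F), Matrix.single_zero]
        have hEs : Eᵀ = E := transpose_std j j 1
        set N := glUnip E hE0 with hN
        have hNmem : N ∈ P := by
          rw [hP]
          refine ⟨1, E, uni_one, hEs, ?_⟩
          rw [glUnip_val]
          simp
        have hc := hcent N hNmem
        have hv : (M : Matrix (Fin n ⊕ Fin n) (Fin n ⊕ Fin n) F) * (N : Matrix _ _ F) =
            (N : Matrix _ _ F) * (M : Matrix _ _ F) := by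
          rw [← Units.val_mul, ← Units.val_mul, hc]
        rw [hM, glUnip_val, Matrix.fromBlocks_multiply, Matrix.fromBlocks_multiply] at hv
        simp only [Matrix.one_mul, Matrix.mul_one, Matrix.mul_zero, Matrix.zero_mul,
          add_zero, zero_add] at hv
        have htr := (Matrix.fromBlocks_inj.mp hv).2.1
        -- htr : A * E + A * B = A * B + E * (Aᵀ)⁻¹
        have hAE : A * E = E * (Aᵀ)⁻¹ := by
          rw [add_comm (A * E)] at htr
          exact add_left_cancel htr
        have hdet : IsUnit (Aᵀ).det := by
          rw [Matrix.det_transpose]; exact uni_isUnit_det hA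
        calc A * E * Aᵀ = E * (Aᵀ)⁻¹ * Aᵀ := by rw [hAE]
          _ = E * ((Aᵀ)⁻¹ * Aᵀ) := by rw [Matrix.mul_assoc]
          _ = E := by rw [Matrix.nonsing_inv_mul _ hdet, Matrix.mul_one]
      ext k j
      have hkj := congrFun (congrFun (key j) k) j
      rw [entry_conj, hA.1 j, mul_one] at hkj
      by_cases h : k = j
      · subst h; simpa [Matrix.single] using hkj
      · rw [Matrix.one_apply_ne h]
        simpa [Matrix.single, Ne.symm h] using hkj
    subst hA1
    rw [Matrix.one_mul, Matrix.transpose_one, inv_one] at hM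
    -- Step 2 : row conditions on B
    have hBrow : ∀ i j l : Fin n, i < j → l ≠ i → B j l = 0 := by
      intro i j l hij hli
      set S := Matrix.single i j (1:F) with hS
      set C := 1 + S with hC
      have hCuni : IsUnitriangular C := by
        constructor
        · intro k
          have : S k k = 0 := by
            apply Matrix.single_apply_of_ne
            rintro ⟨rfl, rfl⟩
            exact absurd hij (lt_irrefl _)
          simp [hC, Matrix.add_apply, this, Matrix.one_apply_eq]
        · intro k l' hlk
          have h1 : (1 : Matrix (Fin n) (Fin n) F) k l' = 0 := Matrix.one_apply_ne hlk.ne'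
          have h2' : S k l' = 0 := by
            apply Matrix.single_apply_of_ne
            rintro ⟨rfl, rfl⟩
            exact absurd (hij.trans hlk) (lt_irrefl _)
          simp [hC, Matrix.add_apply, h1, h2']
      have hSS : S * S = 0 := by
        rw [hS]
        exact Matrix.single_mul_single_of_ne (c := (1:F)) i j i hij.ne' (1:F)
      have hS2 : S + S = 0 := by
        rw [hS, ← Matrix.single_add, h2 (1:F), Matrix.single_zero]
      have hCC : C * C = 1 := by
        have hexp : (1 + S) * (1 + S) = 1 + (S + S) + S * S := by noncomm_ring
        rw [hC, hexp, hS2, hSS, add_zero, add_zero]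
      have hCT : Cᵀ * Cᵀ = 1 := by
        rw [← Matrix.transpose_mul, hCC, Matrix.transpose_one]
      have hCinv : (Cᵀ)⁻¹ = Cᵀ := Matrix.inv_eq_right_inv hCT
      set N : GL (Fin n ⊕ Fin n) F :=
        ⟨Matrix.fromBlocks C 0 0 Cᵀ, Matrix.fromBlocks C 0 0 Cᵀ,
         by rw [Matrix.fromBlocks_multiply]; simp [hCC, hCT, Matrix.fromBlocks_one],
         by rw [Matrix.fromBlocks_multiply]; simp [hCC, hCT, Matrix.fromBlocks_one]⟩ with hNdef
      have hNmem : N ∈ P := by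
        rw [hP]
        exact ⟨C, 0, hCuni, by simp, by
          show Matrix.fromBlocks C 0 0 Cᵀ = Matrix.fromBlocks C (C * 0) 0 (Cᵀ)⁻¹
          rw [hCinv, Matrix.mul_zero]⟩
      have hc := hcent N hNmem
      have hv : (M : Matrix (Fin n ⊕ Fin n) (Fin n ⊕ Fin n) F) * (N : Matrix _ _ F) =
          (N : Matrix _ _ F) * (M : Matrix _ _ F) := by
        rw [← Units.val_mul, ← Units.val_mul, hc]
      rw [hM] at hv
      have hNval : (N : Matrix (Fin n ⊕ Fin n) (Fin n ⊕ Fin n) F) =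
          Matrix.fromBlocks C 0 0 Cᵀ := rfl
      rw [hNval, Matrix.fromBlocks_multiply, Matrix.fromBlocks_multiply] at hv
      simp only [Matrix.one_mul, Matrix.mul_one, Matrix.mul_zero, Matrix.zero_mul,
        add_zero, zero_add] at hv
      have htr := (Matrix.fromBlocks_inj.mp hv).2.1
      -- htr : B * Cᵀ = C * B
      have hCTe : Cᵀ = 1 + Matrix.single j i (1:F) := by
        rw [hC, Matrix.transpose_add, Matrix.transpose_one, hS, transpose_std]
      rw [hCTe, hC, Matrix.mul_add, Matrix.add_mul, Matrix.mul_one, Matrix.one_mul] at htr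
      have hBS : B * Matrix.single j i (1:F) = S * B := add_left_cancel htr
      have hent := congrFun (congrFun hBS i) l
      rw [hS] at hent
      simp [hli] at hent
      exact hent.symm
    refine ⟨B ⟨0, by omega⟩ ⟨0, by omega⟩, B ⟨0, by omega⟩ ⟨1, by omega⟩, ?_⟩
    rw [hM]
    exact congrArg (fun X => Matrix.fromBlocks 1 X 0 1) (Bform hn hBs hBrow)
  · rintro ⟨a, b, hM⟩
    have hmem : M ∈ P := by
      rw [hP]
      refine ⟨1, Dm hn a b, uni_one, Dm_symm hn a b, ?_⟩
      rw [hM]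
      simp
    refine ⟨hmem, fun N hN => ?_⟩
    obtain ⟨C, E, hC, hEs, hNval⟩ := (hP N).mp hN
    apply Units.ext
    rw [Units.val_mul, Units.val_mul, hM, hNval,
      Matrix.fromBlocks_multiply, Matrix.fromBlocks_multiply]
    simp only [Matrix.one_mul, Matrix.mul_one, Matrix.mul_zero, Matrix.zero_mul,
      add_zero, zero_add]
    have hdet : IsUnit (Cᵀ).det := by
      rw [Matrix.det_transpose]; exact uni_isUnit_det hC
    have hkey : Dm hn a b * (Cᵀ)⁻¹ = C * Dm hn a b := by
      calc Dm hn a b * (Cᵀ)⁻¹ = C * Dm hn a b * Cᵀ * (Cᵀ)⁻¹ := by rw [conj_Dm hC hn h2]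
        _ = C * Dm hn a b * (Cᵀ * (Cᵀ)⁻¹) := by rw [Matrix.mul_assoc]
        _ = C * Dm hn a b := by rw [Matrix.mul_nonsing_inv _ hdet, Matrix.mul_one]
    rw [hkey, add_comm (C * E)]

end CenterSylow

lemma elem_ab {G : Type} [Group G] [Finite G] (h2 : ∀ g : G, g * g = 1) {d : ℕ}
    (hcard : Nat.card G = 2 ^ d) : Nonempty (G ≃* Multiplicative (Fin d → ZMod 2)) := by
  have hinv : ∀ g : G, g⁻¹ = g := fun g => inv_eq_of_mul_eq_one_right (h2 g)
  have hcomm : ∀ a b : G, a * b = b * a := fun a b => by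
    calc a * b = (a * b)⁻¹ := (hinv _).symm
      _ = b⁻¹ * a⁻¹ := mul_inv_rev a b
      _ = b * a := by rw [hinv, hinv]
  letI : AddCommGroup (Additive G) :=
    { (inferInstance : AddGroup (Additive G)) with add_comm := fun a b => hcomm a b }
  letI : Module (ZMod 2) (Additive G) := AddCommGroup.zmodModule (by
    intro x
    show (2 : ℕ) • x = 0
    rw [two_smul]
    exact h2 x.toMul)
  haveI : Module.Finite (ZMod 2) (Additive G) := Module.Finite.of_finite
  haveI : Module.Free (ZMod 2) (Additive G) := Module.Free.of_divisionRing _ _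
  set d' := Module.finrank (ZMod 2) (Additive G) with hd'
  have e : Additive G ≃ₗ[ZMod 2] (Fin d' → ZMod 2) := (Module.finBasis (ZMod 2) (Additive G)).equivFun
  have hc : (2:ℕ) ^ d = 2 ^ d' := by
    rw [← hcard]
    have h1 : Nat.card G = Nat.card (Additive G) := rfl
    rw [h1, Nat.card_congr e.toEquiv]
    simp [Nat.card_eq_fintype_card]
  have hdd : d = d' := Nat.pow_right_injective (le_refl 2) hc
  subst hdd
  exact ⟨AddEquiv.toMultiplicativeRight e.toAddEquiv⟩
-- main theorem part, to be appended
namespace CenterSylow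

variable {n : ℕ} {F : Type} [Field F]

lemma Dm_00 (hn : 2 ≤ n) (a b : F) :
    Dm hn a b ⟨0, by omega⟩ ⟨0, by omega⟩ = a := by
  simp [Dm, Matrix.single, Fin.ext_iff]

lemma Dm_01 (hn : 2 ≤ n) (a b : F) :
    Dm hn a b ⟨0, by omega⟩ ⟨1, by omega⟩ = b := by
  simp [Dm, Matrix.single, Fin.ext_iff]

end CenterSylow

open CenterSylow

/-- Over a field with `2 ^ r` elements and `n ≥ 2`, the center of the Sylow
`2`-subgroup `P(n,F)` of `Sp(2n,F)` consists exactly of the block matrices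
`[[I, D],[0, I]]` with `D = a • E_{1,1} + b • (E_{1,2} + E_{2,1})`, and is
isomorphic to `(ℤ/2ℤ)^(2r)`. -/
theorem center_symplectic_sylow_char_two (r n : ℕ) (hr : 0 < r) (hn : 2 ≤ n)
    (F : Type) [Field F] [Fintype F] (hF : Fintype.card F = 2 ^ r)
    (P : Subgroup (GL (Fin n ⊕ Fin n) F))
    (hP : ∀ M : GL (Fin n ⊕ Fin n) F, M ∈ P ↔
      ∃ A B : Matrix (Fin n) (Fin n) F,
        IsUnitriangular A ∧ Bᵀ = B ∧
        (M : Matrix (Fin n ⊕ Fin n) (Fin n ⊕ Fin n) F) =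
          Matrix.fromBlocks A (A * B) 0 (Aᵀ)⁻¹) :
    ((fun M : GL (Fin n ⊕ Fin n) F =>
        (M : Matrix (Fin n ⊕ Fin n) (Fin n ⊕ Fin n) F)) ''
        {M : GL (Fin n ⊕ Fin n) F | M ∈ P ∧ ∀ N ∈ P, M * N = N * M} =
      {X : Matrix (Fin n ⊕ Fin n) (Fin n ⊕ Fin n) F | ∃ a b : F,
        X = Matrix.fromBlocks 1
          (a • Matrix.single (⟨0, by omega⟩ : Fin n) (⟨0, by omega⟩ : Fin n) (1 : F) +
           b • (Matrix.single (⟨0, by omega⟩ : Fin n) (⟨1, by omega⟩ : Fin n) (1 : F) +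
                Matrix.single (⟨1, by omega⟩ : Fin n) (⟨0, by omega⟩ : Fin n) (1 : F)))
          0 1}) ∧
    Nonempty (↥(Subgroup.center ↥P) ≃* Multiplicative (Fin (2 * r) → ZMod 2)) := by
  -- characteristic 2
  have h2 : ∀ x : F, x + x = 0 := by
    haveI hp : CharP F (ringChar F) := ringChar.charP F
    have hprime : (ringChar F).Prime := CharP.char_is_prime F (ringChar F)
    obtain ⟨m, hpr, hcardp⟩ := FiniteField.card F (ringChar F)
    have hch2 : ringChar F = 2 := by
      have hd : ringChar F ∣ 2 ^ r := by
        rw [← hF, hcardp]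
        exact dvd_pow_self _ (by positivity)
      have hd2 : ringChar F ∣ 2 := hpr.dvd_of_dvd_pow hd
      exact (Nat.prime_dvd_prime_iff_eq hpr Nat.prime_two).mp hd2
    intro x
    haveI : CharP F 2 := hch2 ▸ ringChar.charP F
    have h20 : (2 : F) = 0 := by exact_mod_cast CharP.cast_eq_zero F 2
    rw [← two_mul, h20, zero_mul]
  constructor
  · -- set equality
    ext X
    simp only [Set.mem_image, Set.mem_setOf_eq]
    constructor
    · rintro ⟨M, hM, rfl⟩
      obtain ⟨a, b, hab⟩ := (central_iff hn h2 P hP M).mp hM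
      exact ⟨a, b, hab⟩
    · rintro ⟨a, b, hX⟩
      refine ⟨glUnip (Dm hn a b) (Dm_add_self hn h2 a b),
        (central_iff hn h2 P hP _).mpr ⟨a, b, rfl⟩, ?_⟩
      rw [glUnip_val]
      exact hX.symm
  · -- the isomorphism
    have hcentmem : ∀ z : ↥P, z ∈ Subgroup.center ↥P ↔
        ∃ a b : F, ((z : GL (Fin n ⊕ Fin n) F) : Matrix (Fin n ⊕ Fin n) (Fin n ⊕ Fin n) F) =
          Matrix.fromBlocks 1 (Dm hn a b) 0 1 := by
      intro z
      rw [Subgroup.mem_center_iff]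
      constructor
      · intro hz
        refine (central_iff hn h2 P hP z.val).mp ⟨z.2, fun N hN => ?_⟩
        have h := hz ⟨N, hN⟩
        have := congrArg Subtype.val h
        exact this.symm
      · rintro ⟨a, b, hval⟩ g
        have := ((central_iff hn h2 P hP z.val).mpr ⟨a, b, hval⟩).2 g.val g.2
        exact Subtype.ext this.symm
    have h2c : ∀ w : ↥(Subgroup.center ↥P), w * w = 1 := by
      intro w
      obtain ⟨a, b, hval⟩ := (hcentmem w.val).mp w.2
      have hsq : w.val.val * w.val.val = (1 : GL (Fin n ⊕ Fin n) F) := by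
        apply Units.ext
        rw [Units.val_mul, hval, Matrix.fromBlocks_multiply, Units.val_one]
        simp [Dm_add_self hn h2 a b, Matrix.fromBlocks_one]
      exact Subtype.ext (Subtype.ext hsq)
    have φ : ↥(Subgroup.center ↥P) ≃ (F × F) :=
      { toFun := fun w =>
          (w.val.val.val (Sum.inl ⟨0, by omega⟩) (Sum.inr ⟨0, by omega⟩),
           w.val.val.val (Sum.inl ⟨0, by omega⟩) (Sum.inr ⟨1, by omega⟩))
        invFun := fun p =>
          ⟨⟨glUnip (Dm hn p.1 p.2) (Dm_add_self hn h2 p.1 p.2),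
            ((central_iff hn h2 P hP _).mpr ⟨p.1, p.2, rfl⟩).1⟩,
            (hcentmem _).mpr ⟨p.1, p.2, rfl⟩⟩
        left_inv := fun w => by
          obtain ⟨a, b, hval⟩ := (hcentmem w.val).mp w.2
          have hsq : (glUnip
              (Dm hn (w.val.val.val (Sum.inl ⟨0, by omega⟩) (Sum.inr ⟨0, by omega⟩))
                (w.val.val.val (Sum.inl ⟨0, by omega⟩) (Sum.inr ⟨1, by omega⟩)))
              (Dm_add_self hn h2 _ _)) = w.val.val := by
            apply Units.ext
            rw [glUnip_val, hval]
            simp [Matrix.fromBlocks_apply₁₂, Dm_00, Dm_01]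
          exact Subtype.ext (Subtype.ext hsq)
        right_inv := fun p => by
          refine Prod.ext ?_ ?_ <;>
            simp [glUnip_val, Matrix.fromBlocks_apply₁₂, Dm_00, Dm_01] }
    haveI : Finite ↥(Subgroup.center ↥P) := Finite.of_equiv (F × F) φ.symm
    have hcardC : Nat.card ↥(Subgroup.center ↥P) = 2 ^ (2 * r) := by
      rw [Nat.card_congr φ, Nat.card_prod, Nat.card_eq_fintype_card, hF, ← pow_add, two_mul]
    exact elem_ab h2c hcardC
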